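/- For every real s ≥ 1, α_{2,s} = 1/2; equivalently, the infimum over pairs of distinct points x, y ∈ ℝ³ of (‖x‖^s + ‖y‖^s) / (‖x−y‖ · (‖x‖^{s−1} + ‖y‖^{s−1})) equals 1/2. -/

import Mathlib

open MeasureTheory

noncomputable section

/-- `α_{N,s}`. -/
noncomputable def alphaNS (N : ℕ) (s : ℝ) : ℝ :=
  sInf { c : ℝ | ∃ x : Fin N → EuclideanSpace ℝ (Fin 3), Function.Injective x ∧
    c = (∑ j : Fin N, ∑ k : Fin N,
          if j < k then (‖x j‖ ^ s + ‖x k‖ ^ s) / ‖x j - x k‖ else 0) /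
        (((N : ℝ) - 1) * ∑ k : Fin N, ‖x k‖ ^ (s - 1)) }

lemma mul_self_rpow' {a s : ℝ} (ha : 0 ≤ a) (hs : 1 ≤ s) : a * a ^ (s - 1) = a ^ s := by
  have h := Real.rpow_add' ha (show (1:ℝ) + (s - 1) ≠ 0 by linarith)
  rw [show (1:ℝ) + (s-1) = s by ring] at h
  rw [h, Real.rpow_one]

lemma core_ineq {a b s : ℝ} (ha : 0 ≤ a) (hb : 0 ≤ b) (hs : 1 ≤ s) :
    (a + b) * (a ^ (s-1) + b ^ (s-1)) ≤ 2 * (a ^ s + b ^ s) := by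
  have ea := mul_self_rpow' ha hs
  have eb := mul_self_rpow' hb hs
  rcases le_total a b with h | h
  · have h1 : a ^ (s-1) ≤ b ^ (s-1) := Real.rpow_le_rpow ha h (by linarith)
    nlinarith [mul_nonneg (sub_nonneg.2 h) (sub_nonneg.2 h1)]
  · have h1 : b ^ (s-1) ≤ a ^ (s-1) := Real.rpow_le_rpow hb h (by linarith)
    nlinarith [mul_nonneg (sub_nonneg.2 h) (sub_nonneg.2 h1)]

lemma ratio_ge {E : Type*} [NormedAddCommGroup E] {s : ℝ} (hs : 1 ≤ s)
    {x y : E} (hxy : x ≠ y) :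
    1/2 ≤ (‖x‖ ^ s + ‖y‖ ^ s) / (‖x - y‖ * (‖x‖ ^ (s-1) + ‖y‖ ^ (s-1))) := by
  have hA : 0 < ‖x‖ ^ (s-1) + ‖y‖ ^ (s-1) := by
    rcases eq_or_ne x 0 with rfl | hx
    · have hy : y ≠ 0 := fun h => hxy (h ▸ rfl)
      have h1 := Real.rpow_pos_of_pos (norm_pos_iff.2 hy) (s-1)
      have h2 := Real.rpow_nonneg (norm_nonneg (0:E)) (s-1)
      linarith
    · have h1 := Real.rpow_pos_of_pos (norm_pos_iff.2 hx) (s-1)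
      have h2 := Real.rpow_nonneg (norm_nonneg y) (s-1)
      linarith
  have hd : 0 < ‖x - y‖ := by rwa [norm_pos_iff, sub_ne_zero]
  rw [le_div_iff₀ (by positivity)]
  have h1 : ‖x - y‖ ≤ ‖x‖ + ‖y‖ := norm_sub_le x y
  have h2 := core_ineq (norm_nonneg x) (norm_nonneg y) hs
  have h3 := mul_le_mul_of_nonneg_right h1 hA.le
  linarith

lemma witness_facts :
    ∃ e : EuclideanSpace ℝ (Fin 3), ‖e‖ = 1 ∧ ‖-e‖ = 1 ∧ ‖e - -e‖ = 2 ∧ e ≠ -e := by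
  refine ⟨EuclideanSpace.single 0 1, ?_, ?_, ?_, ?_⟩
  · simp [EuclideanSpace.norm_single]
  · simp [EuclideanSpace.norm_single]
  · rw [show (EuclideanSpace.single 0 1 : EuclideanSpace ℝ (Fin 3)) - -EuclideanSpace.single 0 1
        = (2:ℝ) • EuclideanSpace.single 0 1 by module]
    rw [norm_smul]
    simp [EuclideanSpace.norm_single]
  · intro h
    have h2 : (EuclideanSpace.single 0 1 : EuclideanSpace ℝ (Fin 3)) = 0 := by
      have := congrArg (· + (EuclideanSpace.single 0 1 : EuclideanSpace ℝ (Fin 3))) h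
      exact by
        have h3 : (2:ℝ) • (EuclideanSpace.single 0 1 : EuclideanSpace ℝ (Fin 3)) = 0 := by
          rw [two_smul]; simpa [neg_add_cancel] using this
        have := smul_eq_zero.mp h3
        rcases this with h | h
        · norm_num at h
        · exact h
    have : ‖(EuclideanSpace.single 0 1 : EuclideanSpace ℝ (Fin 3))‖ = 1 := by
      simp [EuclideanSpace.norm_single]
    rw [h2] at this; simp at this

lemma witness_val {s : ℝ} (hs : 1 ≤ s) :
    ∃ x y : EuclideanSpace ℝ (Fin 3), x ≠ y ∧
      (1:ℝ)/2 = (‖x‖ ^ s + ‖y‖ ^ s) / (‖x - y‖ * (‖x‖ ^ (s-1) + ‖y‖ ^ (s-1))) := by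
  obtain ⟨e, h1, h2, h3, h4⟩ := witness_facts
  exact ⟨e, -e, h4, by rw [h1, h2, h3, Real.one_rpow]; norm_num⟩

theorem alphaNS_two (s : ℝ) (hs : 1 ≤ s) :
    alphaNS 2 s = 1 / 2 ∧
    sInf { c : ℝ | ∃ x y : EuclideanSpace ℝ (Fin 3), x ≠ y ∧
      c = (‖x‖ ^ s + ‖y‖ ^ s) / (‖x - y‖ * (‖x‖ ^ (s - 1) + ‖y‖ ^ (s - 1))) } = 1 / 2 := by
  obtain ⟨e₀, y₀, hne, hval⟩ := witness_val hs
  constructor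
  · unfold alphaNS
    apply le_antisymm
    · apply csInf_le
      · exact ⟨1/2, fun c ⟨x, hinj, hc⟩ => by
          have hx01 : x 0 ≠ x 1 := fun h => by simpa using hinj h
          rw [hc]
          have : (∑ j : Fin 2, ∑ k : Fin 2,
              if j < k then (‖x j‖ ^ s + ‖x k‖ ^ s) / ‖x j - x k‖ else 0)
              = (‖x 0‖ ^ s + ‖x 1‖ ^ s) / ‖x 0 - x 1‖ := by
            simp [Fin.sum_univ_two]
          rw [this]
          have h2 : (((2:ℕ) : ℝ) - 1) = 1 := by norm_num
          rw [h2, one_mul, Fin.sum_univ_two, div_div]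
          exact ratio_ge hs hx01⟩
      · refine ⟨![e₀, y₀], ?_, ?_⟩
        · intro i j h
          fin_cases i <;> fin_cases j <;> simp_all
        · rw [hval]
          have : (∑ j : Fin 2, ∑ k : Fin 2,
              if j < k then (‖![e₀,y₀] j‖ ^ s + ‖![e₀,y₀] k‖ ^ s) / ‖![e₀,y₀] j - ![e₀,y₀] k‖ else 0)
              = (‖e₀‖ ^ s + ‖y₀‖ ^ s) / ‖e₀ - y₀‖ := by
            simp [Fin.sum_univ_two]
          rw [this, Fin.sum_univ_two]
          norm_num [div_div]
    · apply le_csInf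
      · exact ⟨_, ⟨![e₀, y₀], by intro i j h; fin_cases i <;> fin_cases j <;> simp_all, rfl⟩⟩
      · rintro c ⟨x, hinj, rfl⟩
        have hx01 : x 0 ≠ x 1 := fun h => by simpa using hinj h
        have : (∑ j : Fin 2, ∑ k : Fin 2,
            if j < k then (‖x j‖ ^ s + ‖x k‖ ^ s) / ‖x j - x k‖ else 0)
            = (‖x 0‖ ^ s + ‖x 1‖ ^ s) / ‖x 0 - x 1‖ := by
          simp [Fin.sum_univ_two]
        rw [this, Fin.sum_univ_two]
        have h2 : (((2:ℕ) : ℝ) - 1) = 1 := by norm_num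
        rw [h2, one_mul, div_div]
        exact ratio_ge hs hx01
  · apply le_antisymm
    · exact csInf_le ⟨1/2, fun c ⟨x, y, hxy, hc⟩ => hc ▸ ratio_ge hs hxy⟩
        ⟨e₀, y₀, hne, hval⟩
    · exact le_csInf ⟨_, e₀, y₀, hne, rfl⟩ (fun c ⟨x, y, hxy, hc⟩ => hc ▸ ratio_ge hs hxy)
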